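/- arXiv:1710.00347 — 2 statements merged into one kernel-verified Lean document; each statement's English description precedes it below -/
import Mathlib

section
/- Let $R$ be a local ring with maximal ideal $\mathfrak{m}$ and residue field $k$, let $J \subseteq \mathfrak{m}$ be an ideal, and let $a, b \in R/J^2$ be two elements each generating the ideal $J/J^2$ of $R/J^2$. Let $\mathfrak{p} \supseteq J$ be a prime ideal of $R$ such that $bx = 0$ in $R/J^2$ implies $x \in \mathfrak{p}/J^2$. Then there exists $u \in R/J^2$ with $ua = b$; the image of any such $u$ in $R/\mathfrak{p}$ is a unit; and if $u'a = b$ as well, then $u$ and $u'$ have the same image in $R/\mathfrak{p}$. -/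
/-- In a local ring `R` with ideal `J` contained in the maximal ideal, if `a, b ∈ R/J²` each
generate the ideal `J/J²` and the annihilator of `b` is contained in `𝔭/J²` for a prime
`𝔭 ⊇ J`, then there exists `u` with `ua = b`, the image of any such `u` in `R/𝔭` is a unit,
and any two such `u` have the same image in `R/𝔭`. -/
theorem stmt11 {R : Type*} [CommRing R] [IsLocalRing R]
    (J : Ideal R) (hJ : J ≤ IsLocalRing.maximalIdeal R)
    (𝔭 : Ideal R) (h𝔭 : 𝔭.IsPrime) (hJ𝔭 : J ≤ 𝔭)
    (a b : R ⧸ J ^ 2)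
    (ha : Ideal.span {a} = J.map (Ideal.Quotient.mk (J ^ 2)))
    (hb : Ideal.span {b} = J.map (Ideal.Quotient.mk (J ^ 2)))
    (hann : ∀ x : R ⧸ J ^ 2, b * x = 0 → x ∈ 𝔭.map (Ideal.Quotient.mk (J ^ 2))) :
    (∃ u : R ⧸ J ^ 2, u * a = b) ∧
    (∀ u : R ⧸ J ^ 2, u * a = b →
      IsUnit (Ideal.Quotient.factor (S := J ^ 2) (T := 𝔭)
        (le_trans (Ideal.pow_le_self (by norm_num)) hJ𝔭) u)) ∧
    (∀ u u' : R ⧸ J ^ 2, u * a = b → u' * a = b →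
      Ideal.Quotient.factor (S := J ^ 2) (T := 𝔭)
        (le_trans (Ideal.pow_le_self (by norm_num)) hJ𝔭) u =
      Ideal.Quotient.factor (S := J ^ 2) (T := 𝔭)
        (le_trans (Ideal.pow_le_self (by norm_num)) hJ𝔭) u') := by
  set f := Ideal.Quotient.factor (S := J ^ 2) (T := 𝔭)
      (le_trans (Ideal.pow_le_self (by norm_num)) hJ𝔭) with hf
  have hfzero : ∀ x : R ⧸ J ^ 2, x ∈ 𝔭.map (Ideal.Quotient.mk (J ^ 2)) → f x = 0 := by
    intro x hx
    obtain ⟨y, hy, rfl⟩ :=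
      (Ideal.mem_map_iff_of_surjective _ Ideal.Quotient.mk_surjective).mp hx
    simpa [hf, Ideal.Quotient.factor_mk, Ideal.Quotient.eq_zero_iff_mem] using hy
  have hba : b ∈ Ideal.span {a} := by
    rw [ha, ← hb]; exact Ideal.mem_span_singleton_self b
  have hab : a ∈ Ideal.span {b} := by
    rw [hb, ← ha]; exact Ideal.mem_span_singleton_self a
  obtain ⟨u₀, hu₀⟩ := Ideal.mem_span_singleton'.mp hba
  obtain ⟨v, hv⟩ := Ideal.mem_span_singleton'.mp hab
  have hunit : ∀ u : R ⧸ J ^ 2, u * a = b → IsUnit (f u) := by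
    intro u hu
    have h1 : b * (1 - u * v) = 0 := by
      have huvb : u * (v * b) = b := by rw [hv]; exact hu
      ring_nf
      ring_nf at huvb
      linear_combination -huvb
    have h2 : f (1 - u * v) = 0 := hfzero _ (hann _ h1)
    have h3 : f u * f v = 1 := by
      have := map_sub f 1 (u * v)
      rw [h2, map_one, map_mul] at this
      linear_combination this
    exact IsUnit.of_mul_eq_one _ h3
  refine ⟨⟨u₀, hu₀⟩, hunit, ?_⟩
  intro u u' hu hu'
  have hvunit : IsUnit (f v) := by
    obtain ⟨w, hw⟩ := (hunit u hu).exists_right_inv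
    -- from f u * f v = 1 directly:
    have h1 : b * (1 - u * v) = 0 := by
      have huvb : u * (v * b) = b := by rw [hv]; exact hu
      linear_combination -huvb
    have h2 : f (1 - u * v) = 0 := hfzero _ (hann _ h1)
    have h3 : f v * f u = 1 := by
      have := map_sub f 1 (u * v)
      rw [h2, map_one, map_mul] at this
      linear_combination this
    exact IsUnit.of_mul_eq_one _ h3
  have hdiff : b * ((u - u') * v) = 0 := by
    have huvb : u * (v * b) = b := by rw [hv]; exact hu
    have huvb' : u' * (v * b) = b := by rw [hv]; exact hu'
    linear_combination huvb - huvb'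
  have h2 : f ((u - u') * v) = 0 := hfzero _ (hann _ hdiff)
  rw [map_mul, map_sub] at h2
  have h3 : f u - f u' = 0 := by
    rcases hvunit with ⟨w, hw⟩
    have := congrArg (· * (↑w⁻¹ : R ⧸ 𝔭)) h2
    simp only [zero_mul, mul_assoc, ← hw, Units.mul_inv, mul_one] at this
    exact this
  linear_combination h3
end

section
/- Let $\Gamma$ be a free $\mathbb{Z}$-module of finite rank, and let $\sigma$ be a rational polyhedral cone in $\Gamma_{\mathbb{R}}$, i.e. $\sigma = \{\sum_i t_i x_i : t_i \geq 0\}$ for finitely many $x_1,\dots,x_k \in \Gamma$. Let $S_\sigma = \{\alpha \in \Gamma^\vee : \langle \alpha, x\rangle \geq 0 \text{ for all } x \in \sigma\}$, where $\Gamma^\vee = \mathrm{Hom}(\Gamma,\mathbb{Z})$. Then $S_\sigma$ is a finitely generated submonoid of $\Gamma^\vee$, and if $\sigma$ spans $\Gamma_{\mathbb{R}}$, then the group of invertible elements of $S_\sigma$ (i.e. $S_\sigma \cap (-S_\sigma)$) is trivial. -/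
lemma gordan_core {ι : Type*} [Fintype ι] (N : Set (ι → ℕ))
    (hsub : ∀ a ∈ N, ∀ b ∈ N, a ≤ b → b - a ∈ N) :
    ∃ (m : ℕ) (gen : Fin m → (ι → ℕ)),
      (∀ j, gen j ∈ N) ∧
      ∀ a ∈ N, ∃ c : Fin m → ℕ, a = ∑ j, c j • gen j := by
  classical
  set Min : Set (ι → ℕ) :=
    {a | a ∈ N ∧ a ≠ 0 ∧ ∀ b ∈ N, b ≠ 0 → b ≤ a → b = a} with hMin
  have hanti : IsAntichain (· ≤ ·) Min := fun a ha b hb hne hle =>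
    hne (hb.2.2 a ha.1 ha.2.1 hle)
  have hfin : Min.Finite :=
    hanti.finite_of_partiallyWellOrderedOn
      (Set.isPWO_of_wellQuasiOrderedLE Min)
  -- every nonzero element of N has a minimal element below it
  have key : ∀ W : ℕ, ∀ a ∈ N, a ≠ 0 → (∑ i, a i) ≤ W →
      ∃ b ∈ Min, b ≤ a := by
    intro W
    induction W with
    | zero =>
      intro a ha hne hW
      exact absurd (funext fun i => Nat.le_zero.1 (le_trans
        (Finset.single_le_sum (fun i _ => Nat.zero_le _) (Finset.mem_univ i)) hW)) hne
    | succ W ih =>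
      intro a ha hne hW
      by_cases hmin : ∀ b ∈ N, b ≠ 0 → b ≤ a → b = a
      · exact ⟨a, ⟨ha, hne, hmin⟩, le_refl a⟩
      · push_neg at hmin
        obtain ⟨b, hbN, hb0, hba, hbne⟩ := hmin
        have hlt : (∑ i, b i) < ∑ i, a i := by
          have : ∃ i, b i ≠ a i := by
            by_contra h; push_neg at h; exact hbne (funext h)
          obtain ⟨i, hi⟩ := this
          exact Finset.sum_lt_sum (fun i _ => hba i)
            ⟨i, Finset.mem_univ i, lt_of_le_of_ne (hba i) hi⟩
        obtain ⟨c, hc, hcb⟩ := ih b hbN hb0 (by omega)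
        exact ⟨c, hc, le_trans hcb hba⟩
  -- enumerate the minimal elements
  set F := hfin.toFinset with hF
  refine ⟨F.card, fun j => (F.equivFin.symm j : ι → ℕ), fun j =>
    ((Set.Finite.mem_toFinset hfin).1 (F.equivFin.symm j).2).1, ?_⟩
  -- generation by strong induction on the total weight
  have gener : ∀ W : ℕ, ∀ a ∈ N, (∑ i, a i) ≤ W →
      ∃ c : Fin F.card → ℕ, a = ∑ j, c j • ((F.equivFin.symm j : ι → ℕ)) := by
    intro W
    induction W with
    | zero =>
      intro a ha hW
      refine ⟨0, ?_⟩
      have : a = 0 := funext fun i => Nat.le_zero.1 (le_trans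
        (Finset.single_le_sum (fun i _ => Nat.zero_le _) (Finset.mem_univ i)) hW)
      simp [this]
    | succ W ih =>
      intro a ha hW
      by_cases h0 : a = 0
      · exact ⟨0, by simp [h0]⟩
      · obtain ⟨b, hbMin, hba⟩ := key (W + 1) a ha h0 hW
        have hbN : b ∈ N := hbMin.1
        have hb0 : b ≠ 0 := hbMin.2.1
        have hsubN : a - b ∈ N := hsub b hbN a ha hba
        have hsum : (∑ i, (a - b) i) ≤ W := by
          have h1 : (∑ i, (a - b) i) + ∑ i, b i = ∑ i, a i := by
            rw [← Finset.sum_add_distrib]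
            exact Finset.sum_congr rfl fun i _ => Nat.sub_add_cancel (hba i)
          have h2 : 0 < ∑ i, b i := by
            rcases Function.ne_iff.1 hb0 with ⟨i, hi⟩
            exact lt_of_lt_of_le (Nat.pos_of_ne_zero hi)
              (Finset.single_le_sum (fun i _ => Nat.zero_le _) (Finset.mem_univ i))
          omega
        obtain ⟨c, hc⟩ := ih (a - b) hsubN hsum
        set j₀ : Fin F.card := F.equivFin ⟨b, by rw [hF, Set.Finite.mem_toFinset]; exact hbMin⟩
          with hj₀
        refine ⟨fun j => c j + if j = j₀ then 1 else 0, ?_⟩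
        have hgenj₀ : ((F.equivFin.symm j₀ : ι → ℕ)) = b := by
          rw [hj₀, Equiv.symm_apply_apply]
        have : (∑ j, (c j + if j = j₀ then 1 else 0) • ((F.equivFin.symm j : ι → ℕ)))
            = (∑ j, c j • ((F.equivFin.symm j : ι → ℕ))) + b := by
          rw [← hgenj₀]
          rw [Finset.sum_congr rfl (fun j _ => add_smul (c j) _ _), Finset.sum_add_distrib]
          congr 1
          simp [ite_smul]
        rw [this, ← hc]
        funext i
        have hhi := hba i
        simp only [Pi.add_apply, Pi.sub_apply]
        exact (Nat.sub_add_cancel hhi).symm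
  intro a ha
  exact gener (∑ i, a i) a ha le_rfl

/-- Gordan's lemma: for a rational polyhedral cone `σ` in `Γ_ℝ` (here `Γ = ℤ^d`), the monoid
`S_σ = {α ∈ Γ^∨ : ⟨α, σ⟩ ≥ 0}` is a finitely generated submonoid of `Γ^∨`, and if `σ` spans
`Γ_ℝ` then `S_σ` has trivial group of invertible elements. -/
theorem stmt15 (d k : ℕ) (g : Fin k → (Fin d → ℤ))
    (σ : Set (Fin d → ℝ))
    (hσ : σ = {x | ∃ t : Fin k → ℝ, (∀ j, 0 ≤ t j) ∧
      x = ∑ j : Fin k, t j • (fun i => (g j i : ℝ))})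
    (S : Set (Fin d → ℤ))
    (hS : S = {α | ∀ x ∈ σ, 0 ≤ ∑ i : Fin d, (α i : ℝ) * x i}) :
    ((0 : Fin d → ℤ) ∈ S) ∧
    (∀ α ∈ S, ∀ β ∈ S, α + β ∈ S) ∧
    (∃ (m : ℕ) (gen : Fin m → (Fin d → ℤ)),
      (∀ j, gen j ∈ S) ∧
      ∀ α ∈ S, ∃ c : Fin m → ℕ, α = ∑ j : Fin m, c j • gen j) ∧
    (Submodule.span ℝ σ = ⊤ → ∀ α ∈ S, -α ∈ S → α = 0) := by
  classical
  -- membership in S is equivalent to finitely many integer inequalities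
  have hSiff : ∀ α : Fin d → ℤ, α ∈ S ↔ ∀ j, 0 ≤ ∑ i, α i * g j i := by
    intro α
    rw [hS]
    constructor
    · intro hα j
      have hx : (fun i => (g j i : ℝ)) ∈ σ := by
        rw [hσ]
        refine ⟨fun j' => if j' = j then 1 else 0, fun j' => by positivity, ?_⟩
        simp [ite_smul]
      have := hα _ hx
      have hcast : ((∑ i, α i * g j i : ℤ) : ℝ) = ∑ i, (α i : ℝ) * (g j i : ℝ) := by
        push_cast; ring
      exact_mod_cast hcast ▸ this
    · intro h x hx
      rw [hσ] at hx
      obtain ⟨t, ht, rfl⟩ := hx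
      have key : ∑ i, (α i : ℝ) * (∑ j : Fin k, t j • (fun i => (g j i : ℝ))) i
          = ∑ j : Fin k, t j * ((∑ i, α i * g j i : ℤ) : ℝ) := by
        push_cast
        simp only [Finset.sum_apply, Pi.smul_apply, smul_eq_mul]
        simp_rw [Finset.mul_sum]
        rw [Finset.sum_comm]
        exact Finset.sum_congr rfl fun j _ => Finset.sum_congr rfl fun i _ => by ring
      rw [key]
      exact Finset.sum_nonneg fun j _ => mul_nonneg (ht j) (by exact_mod_cast h j)
  -- first two claims
  refine ⟨(hSiff 0).2 fun j => by simp, fun α hα β hβ => (hSiff _).2 fun j => ?_, ?_, ?_⟩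
  · have h1 := (hSiff α).1 hα j
    have h2 := (hSiff β).1 hβ j
    have : ∑ i, (α + β) i * g j i = (∑ i, α i * g j i) + ∑ i, β i * g j i := by
      rw [← Finset.sum_add_distrib]
      exact Finset.sum_congr rfl fun i _ => by simp [add_mul]
    rw [this]; exact add_nonneg h1 h2
  -- finite generation via gordan_core
  · set ι : Type := Fin k ⊕ Fin d ⊕ Fin d with hι
    set N : Set (ι → ℕ) := {w | ∀ j, (w (.inl j) : ℤ)
        = ∑ i, ((w (.inr (.inl i)) : ℤ) - (w (.inr (.inr i)) : ℤ)) * g j i} with hN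
    have hsub : ∀ a ∈ N, ∀ b ∈ N, a ≤ b → b - a ∈ N := by
      intro a ha b hb hab j
      simp only [Pi.sub_apply]
      rw [Nat.cast_sub (hab _), hb j, ha j, ← Finset.sum_sub_distrib]
      refine Finset.sum_congr rfl fun i _ => ?_
      rw [Nat.cast_sub (hab _), Nat.cast_sub (hab _)]
      ring
    obtain ⟨m, gen, hgenN, hgen⟩ := gordan_core N hsub
    -- the projection back to ℤ^d
    set π : (ι → ℕ) → (Fin d → ℤ) :=
      fun w i => (w (.inr (.inl i)) : ℤ) - (w (.inr (.inr i)) : ℤ) with hπ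
    refine ⟨m, fun j => π (gen j), fun j => (hSiff _).2 fun j' => ?_, ?_⟩
    · have := hgenN j j'
      rw [← this]
      exact Int.natCast_nonneg _
    · intro α hα
      -- lift α to N
      set w : ι → ℕ := Sum.elim (fun j => (∑ i, α i * g j i).toNat)
        (Sum.elim (fun i => (α i).toNat) (fun i => (-α i).toNat)) with hw
      have hαi : ∀ i, ((α i).toNat : ℤ) - ((-α i).toNat : ℤ) = α i := by
        intro i
        rcases le_or_gt 0 (α i) with h | h
        · rw [Int.toNat_of_nonneg h, Int.toNat_of_nonpos (by omega)]; ring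
        · rw [Int.toNat_of_nonpos (le_of_lt h), Int.toNat_of_nonneg (by omega)]; ring
      have hwN : w ∈ N := by
        intro j
        simp only [hw, Sum.elim_inl, Sum.elim_inr]
        rw [Int.toNat_of_nonneg ((hSiff α).1 hα j)]
        exact (Finset.sum_congr rfl fun i _ => by rw [hαi]).symm
      obtain ⟨c, hc⟩ := hgen w hwN
      refine ⟨c, funext fun i => ?_⟩
      have h1 : (w (.inr (.inl i)) : ℤ) - (w (.inr (.inr i)) : ℤ) = α i := by
        simp only [hw, Sum.elim_inl, Sum.elim_inr]; exact hαi i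
      have h2 : ∀ x : ι, w x = ∑ j : Fin m, c j * gen j x := by
        intro x
        rw [hc]
        simp [Finset.sum_apply]
      rw [← h1, h2, h2]
      push_cast
      rw [← Finset.sum_sub_distrib]
      simp only [Finset.sum_apply, Pi.smul_apply, smul_eq_mul, nsmul_eq_mul]
      refine Finset.sum_congr rfl fun j _ => ?_
      simp only [hπ, Pi.mul_apply, Pi.natCast_apply]
      push_cast
      ring
  -- triviality of units
  · intro hspan α hα hnα
    set f : (Fin d → ℝ) →ₗ[ℝ] ℝ := ∑ i, (α i : ℝ) • LinearMap.proj i with hf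
    have hfx : ∀ x, f x = ∑ i, (α i : ℝ) * x i := by
      intro x
      simp [hf, LinearMap.sum_apply, smul_eq_mul]
    have hker : σ ⊆ (LinearMap.ker f : Set (Fin d → ℝ)) := by
      intro x hx
      have h1 : 0 ≤ ∑ i, (α i : ℝ) * x i := by rw [hS] at hα; exact hα x hx
      have h2 : 0 ≤ ∑ i, ((-α) i : ℝ) * x i := by rw [hS] at hnα; exact hnα x hx
      have h3 : ∑ i, ((-α) i : ℝ) * x i = -∑ i, (α i : ℝ) * x i := by
        rw [← Finset.sum_neg_distrib]
        exact Finset.sum_congr rfl fun i _ => by simp only [Pi.neg_apply]; push_cast; ring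
      rw [SetLike.mem_coe, LinearMap.mem_ker, hfx]
      rw [h3] at h2
      linarith
    have htop : (⊤ : Submodule ℝ (Fin d → ℝ)) ≤ LinearMap.ker f := by
      rw [← hspan]
      exact Submodule.span_le.2 hker
    funext i
    have h0 : f (Pi.single (M := fun _ : Fin d => ℝ) i 1) = 0 := htop (Submodule.mem_top)
    rw [hfx] at h0
    have h1 : ∑ i', (α i' : ℝ) * (Pi.single (M := fun _ : Fin d => ℝ) i (1:ℝ)) i' = (α i : ℝ) := by
      rw [Finset.sum_eq_single i]
      · simp
      · intro b _ hb; simp [Pi.single_apply, hb]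
      · simp
    rw [h1] at h0
    exact_mod_cast h0
end
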